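/- For the broadcast channel with Y₁ = BSC(p)(X) and Y₂ = BEC(e)(X), p ∈ (0,1/2), if H(p) < e ≤ 1 then for every Markov chain V → X → (Y₁,Y₂) with X uniform on {0,1}, I(V;Y₁) ≥ I(V;Y₂). -/

import Mathlib

open Real

/-- Mutual information (in bits) of a joint pmf `q` on a product of finite alphabets,
with the conventions `log 0 = 0`, `x / 0 = 0`. -/
noncomputable def mutualInfo {A B : Type*} [Fintype A] [Fintype B] (q : A → B → ℝ) : ℝ :=
  ∑ a, ∑ b, q a b * Real.logb 2 (q a b / ((∑ b', q a b') * (∑ a', q a' b)))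

/-- Conditional mutual information `I(A;B|U)` (in bits) of a joint pmf `r` on `U × A × B`. -/
noncomputable def condMutualInfo {U A B : Type*} [Fintype U] [Fintype A] [Fintype B]
    (r : U → A → B → ℝ) : ℝ :=
  ∑ u, ∑ a, ∑ b, r u a b *
    Real.logb 2 ((r u a b * (∑ a', ∑ b', r u a' b')) / ((∑ b', r u a b') * (∑ a', r u a' b)))

/-- Binary entropy function (base 2). -/
noncomputable def binH (t : ℝ) : ℝ := -(t * Real.logb 2 t) - (1 - t) * Real.logb 2 (1 - t)

/-- BSC(p) transition matrix. -/
noncomputable def bscCh (p : ℝ) : Fin 2 → Fin 2 → ℝ := fun x y => if x = y then 1 - p else p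

/-- BEC(e) transition matrix; output `2` is the erasure symbol. -/
noncomputable def becCh (e : ℝ) : Fin 2 → Fin 3 → ℝ := fun x y =>
  if (y : ℕ) = 2 then e else if (y : ℕ) = (x : ℕ) then 1 - e else 0

lemma hasSum_g {δ : ℝ} (h : |δ| < 1) :
    HasSum (fun m : ℕ => 2 * (δ^2) ^ (m+1) / ((2*(m:ℝ)+1) * (2*(m:ℝ)+2)))
      ((1+δ) * Real.log (1+δ) + (1-δ) * Real.log (1-δ)) := by
  have h' : |(-δ)| < 1 := by rwa [abs_neg]
  have h1 := hasSum_pow_div_log_of_abs_lt_one h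
  have h2 := hasSum_pow_div_log_of_abs_lt_one h'
  set f : ℕ → ℝ := fun n => -((1-δ) * (δ^(n+1)/((n:ℝ)+1)) + (1+δ) * ((-δ)^(n+1)/((n:ℝ)+1))) with hf
  have hg : HasSum f ((1+δ) * Real.log (1+δ) + (1-δ) * Real.log (1-δ)) := by
    have := ((h1.mul_left (1-δ)).add (h2.mul_left (1+δ))).neg
    convert this using 1
    · rfl
    have e1 : (1:ℝ) - -δ = 1 + δ := by ring
    rw [e1]; ring
  have hd2 : δ^2 < 1 := by nlinarith [sq_abs δ, abs_nonneg δ]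
  have hd2' : (0:ℝ) ≤ δ^2 := sq_nonneg δ
  have he_eq : ∀ m : ℕ, f (2*m) = 2 * (δ^2)^(m+1) / (2*(m:ℝ)+1) := by
    intro m
    have hneg : (-δ)^(2*m+1) = -δ^(2*m+1) := Odd.neg_pow ⟨m, by ring⟩ δ
    have hpow : δ^(2*m+1) = (δ^2)^m * δ := by
      rw [pow_succ, pow_mul]
    simp only [hf]
    push_cast
    rw [hneg, hpow]
    have hne : (2*(m:ℝ)+1) ≠ 0 := by positivity
    field_simp
    ring
  have ho_eq : ∀ m : ℕ, f (2*m+1) = -(2 * (δ^2)^(m+1) / (2*(m:ℝ)+2)) := by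
    intro m
    have hneg : (-δ)^(2*m+1+1) = δ^(2*m+1+1) := Even.neg_pow ⟨m+1, by ring⟩ δ
    have hpow : δ^(2*m+1+1) = (δ^2)^(m+1) := by
      rw [show 2*m+1+1 = 2*(m+1) by ring, pow_mul]
    simp only [hf]
    push_cast
    rw [hneg, hpow]
    have hne : (2*(m:ℝ)+2) ≠ 0 := by positivity
    field_simp
    ring
  have hbound : ∀ m : ℕ, 2 * (δ^2)^(m+1) / (2*(m:ℝ)+1) ≤ 2 * (δ^2)^m := by
    intro m
    have h1' : 2 * (δ^2)^(m+1) / (2*(m:ℝ)+1) ≤ 2 * (δ^2)^(m+1) := by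
      apply div_le_self (by positivity)
      have : (0:ℝ) ≤ (m:ℝ) := Nat.cast_nonneg m
      linarith
    have h2' : (δ^2)^(m+1) ≤ (δ^2)^m :=
      pow_le_pow_of_le_one hd2' (le_of_lt hd2) (Nat.le_succ m)
    linarith
  have hsgeo : Summable (fun m : ℕ => 2 * (δ^2)^m) :=
    (summable_geometric_of_lt_one hd2' hd2).mul_left 2
  have hsum_even : Summable (fun m : ℕ => f (2*m)) := by
    apply Summable.of_nonneg_of_le (fun m => by rw [he_eq m]; positivity)
      (fun m => by rw [he_eq m]; exact hbound m) hsgeo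
  have hsum_odd : Summable (fun m : ℕ => f (2*m+1)) := by
    apply Summable.of_norm_bounded hsgeo
    intro m
    rw [ho_eq m, Real.norm_eq_abs, abs_neg, abs_of_nonneg (by positivity)]
    have h1' : 2 * (δ^2)^(m+1) / (2*(m:ℝ)+2) ≤ 2 * (δ^2)^(m+1) := by
      apply div_le_self (by positivity)
      have : (0:ℝ) ≤ (m:ℝ) := Nat.cast_nonneg m
      linarith
    have h2' : (δ^2)^(m+1) ≤ (δ^2)^m :=
      pow_le_pow_of_le_one hd2' (le_of_lt hd2) (Nat.le_succ m)
    linarith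
  have hA := hsum_even.hasSum
  have hB := hsum_odd.hasSum
  have hAB := hA.even_add_odd hB
  have hval : (∑' m, f (2*m)) + (∑' m, f (2*m+1))
      = (1+δ) * Real.log (1+δ) + (1-δ) * Real.log (1-δ) := hAB.unique hg
  have := hA.add hB
  rw [hval] at this
  have hfun : (fun m : ℕ => f (2*m) + f (2*m+1))
      = fun m : ℕ => 2 * (δ^2) ^ (m+1) / ((2*(m:ℝ)+1) * (2*(m:ℝ)+2)) := by
    funext m
    rw [he_eq m, ho_eq m]
    have h1' : (2*(m:ℝ)+1) ≠ 0 := by positivity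
    have h2' : (2*(m:ℝ)+2) ≠ 0 := by positivity
    field_simp
    ring
  rwa [hfun] at this

lemma binH_bias {δ : ℝ} (h : |δ| < 1) :
    binH ((1-δ)/2) = 1 - ((1+δ) * Real.log (1+δ) + (1-δ) * Real.log (1-δ)) / (2 * Real.log 2) := by
  have hd1 : -1 < δ := by cases abs_lt.mp h; linarith
  have hd2 : δ < 1 := by cases abs_lt.mp h; assumption
  have h1 : (0:ℝ) < 1 - δ := by linarith
  have h2 : (0:ℝ) < 1 + δ := by linarith
  have hlog2 : Real.log 2 ≠ 0 := by
    exact ne_of_gt (Real.log_pos (by norm_num))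
  unfold binH Real.logb
  have e1 : Real.log ((1-δ)/2) = Real.log (1-δ) - Real.log 2 :=
    Real.log_div (ne_of_gt h1) (by norm_num)
  have e2 : (1:ℝ) - (1-δ)/2 = (1+δ)/2 := by ring
  have e3 : Real.log ((1+δ)/2) = Real.log (1+δ) - Real.log 2 :=
    Real.log_div (ne_of_gt h2) (by norm_num)
  rw [e1, e2, e3]
  field_simp
  ring

noncomputable def cSeq (m : ℕ) : ℝ := 1 / ((2*(m:ℝ)+1) * (2*(m:ℝ)+2) * Real.log 2)

lemma cSeq_nonneg (m : ℕ) : 0 ≤ cSeq m := by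
  unfold cSeq
  have := Real.log_pos (by norm_num : (1:ℝ) < 2)
  positivity

lemma hasSum_oneSubBinH {δ : ℝ} (h : |δ| < 1) :
    HasSum (fun m : ℕ => cSeq m * (δ^2) ^ (m+1)) (1 - binH ((1-δ)/2)) := by
  have hlog2 : (0:ℝ) < Real.log 2 := Real.log_pos (by norm_num)
  have := (hasSum_g h).div_const (2 * Real.log 2)
  rw [binH_bias h]
  have hfun : (fun m : ℕ => 2 * (δ^2) ^ (m+1) / ((2*(m:ℝ)+1) * (2*(m:ℝ)+2)) / (2 * Real.log 2))
      = fun m : ℕ => cSeq m * (δ^2) ^ (m+1) := by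
    funext m
    unfold cSeq
    have h1' : (2*(m:ℝ)+1) ≠ 0 := by positivity
    have h2' : (2*(m:ℝ)+2) ≠ 0 := by positivity
    field_simp
  rw [hfun] at this
  convert this using 1
  · rfl
  ring

lemma binH_zero : binH 0 = 0 := by simp [binH]

lemma binH_one : binH 1 = 0 := by simp [binH]

lemma binH_nonneg {t : ℝ} (h0 : 0 ≤ t) (h1 : t ≤ 1) : 0 ≤ binH t := by
  have l1 : Real.logb 2 t ≤ 0 := Real.logb_nonpos (by norm_num) h0 h1
  have l2 : Real.logb 2 (1-t) ≤ 0 := Real.logb_nonpos (by norm_num) (by linarith) (by linarith)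
  unfold binH
  nlinarith

lemma binH_le_one {t : ℝ} (h0 : 0 ≤ t) (h1 : t ≤ 1) : binH t ≤ 1 := by
  rcases eq_or_lt_of_le h0 with h|h0
  · rw [← h, binH_zero]; norm_num
  rcases eq_or_lt_of_le h1 with h|h1
  · rw [h, binH_one]; norm_num
  have hδ : |1 - 2*t| < 1 := by rw [abs_lt]; constructor <;> linarith
  have hs := hasSum_oneSubBinH hδ
  have e : (1 - (1-2*t))/2 = t := by ring
  rw [e] at hs
  have : 0 ≤ 1 - binH t := hs.nonneg (fun m => by
    have := cSeq_nonneg m; positivity)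
  linarith

lemma binH_pos {t : ℝ} (h0 : 0 < t) (h1 : t < 1) : 0 < binH t := by
  have l1 : Real.logb 2 t < 0 := Real.logb_neg (by norm_num) h0 h1
  have l2 : Real.logb 2 (1-t) ≤ 0 := Real.logb_nonpos (by norm_num) (by linarith) (by linarith)
  unfold binH
  nlinarith

lemma binH_symm (t : ℝ) : binH (1 - t) = binH t := by
  unfold binH
  ring_nf

set_option maxHeartbeats 1000000 in
lemma cSeq_partial (s : Finset ℕ) {d : ℝ} (hd : |d| < 1) :
    ∑ m ∈ s, cSeq m * (d^2) ^ (m+1) ≤ 1 := by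
  obtain ⟨l, r⟩ := abs_lt.mp hd
  have hs := hasSum_oneSubBinH hd
  have h1 : ∑ m ∈ s, cSeq m * (d^2) ^ (m+1) ≤ 1 - binH ((1 - d)/2) :=
    sum_le_hasSum s (fun m _ => by have := cSeq_nonneg m; positivity) hs
  have hb : 0 ≤ binH ((1 - d)/2) := binH_nonneg (by linarith) (by linarith)
  linarith

set_option maxHeartbeats 1000000 in
lemma cSeq_sum_le_one (s : Finset ℕ) : ∑ m ∈ s, cSeq m ≤ 1 := by
  have hδ : ∀ n : ℕ, |1 - ((n:ℝ)+2)⁻¹| < 1 := by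
    intro n
    have h2 : (0:ℝ) < (n:ℝ)+2 := by positivity
    have h3 : ((n:ℝ)+2)⁻¹ ≤ 1 := by
      rw [inv_le_one_iff₀]; right; linarith
    have h4 : 0 < ((n:ℝ)+2)⁻¹ := by positivity
    rw [abs_lt]; constructor <;> nlinarith
  have key : ∀ n : ℕ, ∑ m ∈ s, cSeq m * ((1 - ((n:ℝ)+2)⁻¹)^2) ^ (m+1) ≤ 1 :=
    fun n => cSeq_partial s (hδ n)
  have hlim : Filter.Tendsto (fun n : ℕ => ∑ m ∈ s, cSeq m * ((1 - ((n:ℝ)+2)⁻¹)^2) ^ (m+1))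
      Filter.atTop (nhds (∑ m ∈ s, cSeq m)) := by
    have hδlim : Filter.Tendsto (fun n : ℕ => 1 - ((n:ℝ)+2)⁻¹) Filter.atTop (nhds 1) := by
      have h0 : Filter.Tendsto (fun n : ℕ => ((n:ℝ)+2)⁻¹) Filter.atTop (nhds 0) :=
        (Filter.tendsto_atTop_add_const_right _ 2 tendsto_natCast_atTop_atTop).inv_tendsto_atTop
      have h1 := (tendsto_const_nhds (x := (1:ℝ))).sub h0
      simpa using h1
    have hterm : ∀ m ∈ s, Filter.Tendsto (fun n : ℕ => cSeq m * ((1 - ((n:ℝ)+2)⁻¹)^2) ^ (m+1))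
        Filter.atTop (nhds (cSeq m)) := by
      intro m _
      have h1 : Filter.Tendsto (fun n : ℕ => ((1 - ((n:ℝ)+2)⁻¹)^2) ^ (m+1))
          Filter.atTop (nhds 1) := by
        simpa using ((hδlim.pow 2).pow (m+1))
      simpa using (tendsto_const_nhds.mul h1)
    simpa using tendsto_finset_sum s hterm
  exact le_of_tendsto hlim (Filter.Eventually.of_forall key)

lemma cheb_fin {c x y : ℕ → ℝ} (hc : ∀ i, 0 ≤ c i)
    (hmono : ∀ i j, 0 ≤ (x i - x j) * (y i - y j)) (s : Finset ℕ) :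
    (∑ i ∈ s, c i * x i) * (∑ i ∈ s, c i * y i)
      ≤ (∑ i ∈ s, c i) * (∑ i ∈ s, c i * (x i * y i)) := by
  have key : 0 ≤ ∑ i ∈ s, ∑ j ∈ s, c i * c j * ((x i - x j) * (y i - y j)) :=
    Finset.sum_nonneg fun i _ => Finset.sum_nonneg fun j _ =>
      mul_nonneg (mul_nonneg (hc i) (hc j)) (hmono i j)
  have expand : ∑ i ∈ s, ∑ j ∈ s, c i * c j * ((x i - x j) * (y i - y j))
      = (∑ i ∈ s, c i * (x i * y i)) * (∑ i ∈ s, c i)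
        - (∑ i ∈ s, c i * x i) * (∑ i ∈ s, c i * y i)
        - (∑ i ∈ s, c i * y i) * (∑ i ∈ s, c i * x i)
        + (∑ i ∈ s, c i) * (∑ i ∈ s, c i * (x i * y i)) := by
    rw [Finset.sum_mul_sum, Finset.sum_mul_sum, Finset.sum_mul_sum, Finset.sum_mul_sum]
    rw [← Finset.sum_sub_distrib, ← Finset.sum_sub_distrib, ← Finset.sum_add_distrib]
    refine Finset.sum_congr rfl fun i _ => ?_
    rw [← Finset.sum_sub_distrib, ← Finset.sum_sub_distrib, ← Finset.sum_add_distrib]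
    exact Finset.sum_congr rfl fun j _ => by ring
  nlinarith [key, expand]

lemma cheb_tsum {c x y : ℕ → ℝ} (hc : ∀ i, 0 ≤ c i)
    (hmono : ∀ i j, 0 ≤ (x i - x j) * (y i - y j))
    (hs : Summable c) (hsx : Summable (fun i => c i * x i))
    (hsy : Summable (fun i => c i * y i)) (hsxy : Summable (fun i => c i * (x i * y i))) :
    (∑' i, c i * x i) * (∑' i, c i * y i) ≤ (∑' i, c i) * (∑' i, c i * (x i * y i)) := by
  have h1 : Filter.Tendsto
      (fun s : Finset ℕ => (∑ i ∈ s, c i * x i) * (∑ i ∈ s, c i * y i))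
      Filter.atTop (nhds ((∑' i, c i * x i) * (∑' i, c i * y i))) :=
    Filter.Tendsto.mul hsx.hasSum hsy.hasSum
  have h2 : Filter.Tendsto
      (fun s : Finset ℕ => (∑ i ∈ s, c i) * (∑ i ∈ s, c i * (x i * y i)))
      Filter.atTop (nhds ((∑' i, c i) * (∑' i, c i * (x i * y i)))) :=
    Filter.Tendsto.mul hs.hasSum hsxy.hasSum
  exact le_of_tendsto_of_tendsto' h1 h2 (cheb_fin hc hmono)

set_option maxHeartbeats 1000000 in
lemma core {p α : ℝ} (hp0 : 0 < p) (hp1 : p < 1/2) (ha0 : 0 ≤ α) (ha1 : α ≤ 1) :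
    (1 - binH p) * (1 - binH α) ≤ 1 - binH (α*(1-p) + (1-α)*p) := by
  have hBp0 : 0 ≤ binH p := binH_nonneg (le_of_lt hp0) (by linarith)
  have hBp1 : binH p ≤ 1 := binH_le_one (le_of_lt hp0) (by linarith)
  rcases eq_or_lt_of_le ha0 with h|ha0'
  · rw [← h]; rw [binH_zero]
    have : (0:ℝ)*(1-p) + (1-0)*p = p := by ring
    rw [this]; nlinarith
  rcases eq_or_lt_of_le ha1 with h|ha1'
  · rw [h, binH_one]
    have e : (1:ℝ)*(1-p) + (1-1)*p = 1 - p := by ring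
    rw [e, binH_symm]; nlinarith
  -- interior case
  set δ := 1 - 2*α with hδdef
  set ε := 1 - 2*p with hεdef
  have hδ : |δ| < 1 := by rw [abs_lt]; constructor <;> [skip; skip] <;> simp only [hδdef] <;> linarith
  have hε : |ε| < 1 := by rw [abs_lt]; constructor <;> simp only [hεdef] <;> linarith
  have hδε : |δ*ε| < 1 := by
    rw [abs_mul]
    nlinarith [abs_nonneg δ, abs_nonneg ε]
  have hαeq : (1 - δ)/2 = α := by rw [hδdef]; ring
  have hpeq : (1 - ε)/2 = p := by rw [hεdef]; ring
  have hβeq : (1 - δ*ε)/2 = α*(1-p) + (1-α)*p := by rw [hδdef, hεdef]; ring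
  have hsα := hasSum_oneSubBinH hδ; rw [hαeq] at hsα
  have hsp := hasSum_oneSubBinH hε; rw [hpeq] at hsp
  have hsβ := hasSum_oneSubBinH hδε; rw [hβeq] at hsβ
  -- setup for Chebyshev
  set u := δ^2 with hu
  set v := ε^2 with hv
  have hu0 : 0 ≤ u := sq_nonneg δ
  have hv0 : 0 ≤ v := sq_nonneg ε
  have hu1 : u ≤ 1 := by nlinarith [sq_abs δ, abs_nonneg δ]
  have hv1 : v ≤ 1 := by nlinarith [sq_abs ε, abs_nonneg ε]
  have hxy : ∀ m : ℕ, u^(m+1) * v^(m+1) = ((δ*ε)^2)^(m+1) := by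
    intro m; rw [hu, hv, ← mul_pow, ← mul_pow]
  have hmono : ∀ i j : ℕ, 0 ≤ (u^(i+1) - u^(j+1)) * (v^(i+1) - v^(j+1)) := by
    intro i j
    rcases le_total i j with hij|hij
    · have h1 : u^(j+1) ≤ u^(i+1) := pow_le_pow_of_le_one hu0 hu1 (by omega)
      have h2 : v^(j+1) ≤ v^(i+1) := pow_le_pow_of_le_one hv0 hv1 (by omega)
      exact mul_nonneg (by linarith) (by linarith)
    · have h1 : u^(i+1) ≤ u^(j+1) := pow_le_pow_of_le_one hu0 hu1 (by omega)
      have h2 : v^(i+1) ≤ v^(j+1) := pow_le_pow_of_le_one hv0 hv1 (by omega)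
      nlinarith
  have hsummc : Summable cSeq := by
    have hbase : Summable (fun n : ℕ => 1 / ((n:ℝ)) ^ 2) :=
      summable_one_div_nat_pow.mpr (by norm_num)
    have hbase' : Summable (fun n : ℕ => 1 / ((n:ℝ)+1) ^ 2) := by
      have := (summable_nat_add_iff 1).mpr hbase
      simpa using this
    apply Summable.of_nonneg_of_le cSeq_nonneg ?_ hbase'
    intro m
    unfold cSeq
    have hl2 : 1 ≤ Real.log 2 * 2 := by
      nlinarith [Real.log_two_gt_d9]
    have hm : (0:ℝ) ≤ (m:ℝ) := Nat.cast_nonneg m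
    rw [div_le_div_iff₀ (by positivity) (by positivity)]
    have hq : 2*((m:ℝ)+1)^2 ≤ (2*(m:ℝ)+1)*(2*(m:ℝ)+2) := by nlinarith
    have hlp : (0:ℝ) < Real.log 2 := Real.log_pos (by norm_num)
    have k1 := mul_le_mul_of_nonneg_left hl2 (sq_nonneg ((m:ℝ)+1))
    have k2 := mul_le_mul_of_nonneg_left hq hlp.le
    nlinarith [k1, k2]
  have hsx := hsα.summable
  have hsy := hsp.summable
  have hsxyfun : (fun m : ℕ => cSeq m * (u^(m+1) * v^(m+1)))
      = fun m : ℕ => cSeq m * ((δ*ε)^2)^(m+1) := funext fun m => by rw [hxy m]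
  have hsxy : Summable (fun m : ℕ => cSeq m * (u^(m+1) * v^(m+1))) := by
    rw [hsxyfun]; exact hsβ.summable
  have hch := cheb_tsum cSeq_nonneg hmono hsummc hsx hsy hsxy
  rw [hsα.tsum_eq, hsp.tsum_eq] at hch
  rw [hsxyfun] at hch
  rw [hsβ.tsum_eq] at hch
  have hS : ∑' m, cSeq m ≤ 1 :=
    Summable.tsum_le_of_sum_le hsummc cSeq_sum_le_one
  have hβ0 : 0 ≤ 1 - binH (α*(1-p) + (1-α)*p) := by
    have := hsβ.nonneg (fun m => by have := cSeq_nonneg m; positivity)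
    linarith
  calc (1 - binH p) * (1 - binH α) = (1 - binH α) * (1 - binH p) := by ring
  _ ≤ (∑' m, cSeq m) * (1 - binH (α*(1-p) + (1-α)*p)) := hch
  _ ≤ 1 * (1 - binH (α*(1-p) + (1-α)*p)) := mul_le_mul_of_nonneg_right hS hβ0
  _ = 1 - binH (α*(1-p) + (1-α)*p) := one_mul _

lemma oneSub {α : ℝ} (h0 : 0 ≤ α) (h1 : α ≤ 1) :
    α * Real.logb 2 (2*α) + (1-α) * Real.logb 2 (2*(1-α)) = 1 - binH α := by
  rcases eq_or_lt_of_le h0 with h|h0'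
  · rw [← h]; simp [binH]
  rcases eq_or_lt_of_le h1 with h|h1'
  · rw [h]; simp [binH]
  have l1 : Real.logb 2 (2*α) = 1 + Real.logb 2 α := by
    rw [Real.logb_mul (by norm_num) (ne_of_gt h0'), Real.logb_self_eq_one] <;> norm_num
  have l2 : Real.logb 2 (2*(1-α)) = 1 + Real.logb 2 (1-α) := by
    rw [Real.logb_mul (by norm_num) (by linarith), Real.logb_self_eq_one] <;> norm_num
  rw [l1, l2]; unfold binH; ring

lemma perv {p e : ℝ} (hp0 : 0 < p) (hp1 : p < 1/2) (he0 : binH p < e) (he1 : e ≤ 1)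
    {a b : ℝ} (ha : 0 ≤ a) (hb : 0 ≤ b) :
    a*(1-e) * Real.logb 2 (a*(1-e) / ((a+b) * ((1-e)/2)))
    + b*(1-e) * Real.logb 2 (b*(1-e) / ((a+b) * ((1-e)/2)))
    + (a+b)*e * Real.logb 2 ((a+b)*e / ((a+b)*e))
    ≤ (a*(1-p)+b*p) * Real.logb 2 ((a*(1-p)+b*p) / ((a+b) * (1/2)))
    + (a*p+b*(1-p)) * Real.logb 2 ((a*p+b*(1-p)) / ((a+b) * (1/2))) := by
  have hBp : 0 < binH p := binH_pos hp0 (by linarith)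
  have he' : 0 < e := lt_trans hBp he0
  have h3 : (a+b)*e * Real.logb 2 ((a+b)*e / ((a+b)*e)) = 0 := by
    rcases eq_or_ne ((a+b)*e) 0 with h|h
    · rw [h]; ring
    · rw [div_self h, Real.logb_one, mul_zero]
  rw [h3, add_zero]
  rcases eq_or_lt_of_le (by positivity : (0:ℝ) ≤ a + b) with hr|hr
  · have ha0 : a = 0 := by linarith
    have hb0 : b = 0 := by linarith
    simp [ha0, hb0]
  set r := a + b with hrdef
  set α := a / r with hα
  have hα0 : 0 ≤ α := by positivity
  have hα1 : α ≤ 1 := by rw [hα]; rw [div_le_one hr]; linarith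
  have hbr : b / r = 1 - α := by
    rw [hα]; field_simp; simp only [hrdef]; ring
  have haα : a = r * α := by rw [hα]; field_simp
  have hbα : b = r * (1 - α) := by rw [← hbr]; field_simp
  -- rewrite LHS
  have lhs_eq : a*(1-e) * Real.logb 2 (a*(1-e) / (r * ((1-e)/2)))
      + b*(1-e) * Real.logb 2 (b*(1-e) / (r * ((1-e)/2)))
      = (1-e) * (r * (1 - binH α)) := by
    rcases eq_or_lt_of_le he1 with he|he
    · rw [← he]; ring_nf
    · have h1e : (0:ℝ) < 1 - e := by linarith
      have e1 : a*(1-e) / (r * ((1-e)/2)) = 2*α := by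
        rw [haα]; field_simp
      have e2 : b*(1-e) / (r * ((1-e)/2)) = 2*(1-α) := by
        rw [hbα]; field_simp
      rw [e1, e2, ← oneSub hα0 hα1, haα, hbα]; ring
  -- rewrite RHS
  set β := α*(1-p) + (1-α)*p with hβ
  have hβ0 : 0 ≤ β := by rw [hβ]; nlinarith
  have hβ1 : β ≤ 1 := by rw [hβ]; nlinarith
  have hA : a*(1-p)+b*p = r * β := by rw [haα, hbα, hβ]; ring
  have hB : a*p+b*(1-p) = r * (1 - β) := by rw [haα, hbα, hβ]; ring
  have rhs_eq : (a*(1-p)+b*p) * Real.logb 2 ((a*(1-p)+b*p) / (r * (1/2)))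
      + (a*p+b*(1-p)) * Real.logb 2 ((a*p+b*(1-p)) / (r * (1/2)))
      = r * (1 - binH β) := by
    have e1 : (a*(1-p)+b*p) / (r * (1/2)) = 2*β := by rw [hA]; field_simp
    have e2 : (a*p+b*(1-p)) / (r * (1/2)) = 2*(1-β) := by rw [hB]; field_simp
    rw [e1, e2, hA, hB, ← oneSub hβ0 hβ1]; ring
  rw [lhs_eq, rhs_eq]
  have hcore := core hp0 hp1 hα0 hα1
  have hBα0 : 0 ≤ 1 - binH α := by have := binH_le_one hα0 hα1; linarith
  calc (1-e) * (r * (1 - binH α)) ≤ (1 - binH p) * (r * (1 - binH α)) := by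
        apply mul_le_mul_of_nonneg_right (by linarith) (by positivity)
  _ = r * ((1 - binH p) * (1 - binH α)) := by ring
  _ ≤ r * (1 - binH β) := by
        apply mul_le_mul_of_nonneg_left _ hr.le
        rw [hβ]; exact hcore

/-- For the BSC(p)/BEC(e) broadcast channel with H(p) < e ≤ 1, every Markov chain
V → X → (Y₁,Y₂) with X uniform satisfies I(V;Y₁) ≥ I(V;Y₂). -/
theorem stmt19 (p e : ℝ) (hp0 : 0 < p) (hp1 : p < 1 / 2) (he0 : binH p < e) (he1 : e ≤ 1) :
    ∀ (k : ℕ) (q : Fin k → Fin 2 → ℝ), (∀ v x, 0 ≤ q v x) →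
      (∀ x, ∑ v, q v x = 1 / 2) →
      mutualInfo (fun v y₂ => ∑ x, q v x * becCh e x y₂)
        ≤ mutualInfo (fun v y₁ => ∑ x, q v x * bscCh p x y₁) := by
  intro k q hq hqs
  unfold mutualInfo
  simp only [becCh, bscCh, Fin.sum_univ_two, Fin.sum_univ_three]
  norm_num
  apply Finset.sum_le_sum
  intro v _
  have c0 : (∑ x : Fin k, q x 0 * (1 - e)) = (1-e)/2 := by
    rw [← Finset.sum_mul, hqs 0]; ring
  have c1 : (∑ x : Fin k, q x 1 * (1 - e)) = (1-e)/2 := by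
    rw [← Finset.sum_mul, hqs 1]; ring
  have c2 : (∑ x : Fin k, (q x 0 * e + q x 1 * e)) = e := by
    rw [Finset.sum_add_distrib, ← Finset.sum_mul, ← Finset.sum_mul, hqs 0, hqs 1]; ring
  have c3 : (∑ x : Fin k, (q x 0 * (1 - p) + q x 1 * p)) = 1/2 := by
    rw [Finset.sum_add_distrib, ← Finset.sum_mul, ← Finset.sum_mul, hqs 0, hqs 1]; ring
  have c4 : (∑ x : Fin k, (q x 0 * p + q x 1 * (1 - p))) = 1/2 := by
    rw [Finset.sum_add_distrib, ← Finset.sum_mul, ← Finset.sum_mul, hqs 0, hqs 1]; ring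
  rw [c0, c1, c2, c3, c4]
  have r1 : q v 0 * (1-e) + q v 1 * (1-e) + (q v 0 * e + q v 1 * e) = q v 0 + q v 1 := by ring
  rw [r1]
  have r2 : q v 0 * e + q v 1 * e = (q v 0 + q v 1) * e := by ring
  rw [r2]
  have r3 : q v 0 * (1-p) + q v 1 * p + (q v 0 * p + q v 1 * (1-p)) = q v 0 + q v 1 := by ring
  rw [r3]
  exact perv hp0 hp1 he0 he1 (hq v 0) (hq v 1)
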